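/- Assume the PACA setting with the Slater condition, and suppose the PACA sequence (xᵏ) is infinite (xᵏ ∉ C for all k). Then the sequence (dist(xᵏ, C)) converges R-linearly to 0, i.e. limsup_{k→∞} dist(xᵏ, C)^{1/k} < 1. -/

import Mathlib

open Filter
open scoped RealInnerProductSpace

set_option maxHeartbeats 1600000 in
theorem stmt_16 {n m : ℕ} (hm : 0 < m)
    (f : Fin m → EuclideanSpace ℝ (Fin n) → ℝ)
    (hconv : ∀ i, ConvexOn ℝ Set.univ (f i))
    (xhat : EuclideanSpace ℝ (Fin n)) (hslater : ∀ i, f i xhat < 0)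
    (ε : ℕ → ℝ) (hεpos : ∀ k, 0 < ε k) (hεanti : StrictAnti ε)
    (hεlim : Tendsto ε atTop (nhds 0))
    (x : ℕ → EuclideanSpace ℝ (Fin n))
    (u v : Fin m → ℕ → EuclideanSpace ℝ (Fin n))
    (w : ℕ → EuclideanSpace ℝ (Fin n))
    (hsub : ∀ i k, ∀ z, f i (x k) + ⟪u i k, z - x k⟫ ≤ f i z)
    (hune : ∀ i k, 0 < f i (x k) + ε k → u i k ≠ 0)
    (hv : ∀ i k, v i k = (max 0 (f i (x k) + ε k) / ‖u i k‖ ^ 2) • u i k)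
    (hw : ∀ k, w k = (m : ℝ)⁻¹ • ∑ i, v i k)
    (hstep0 : ∀ k, w k = 0 → x (k + 1) = x k)
    (hstep : ∀ k, w k ≠ 0 →
      x (k + 1) = x k - (((m : ℝ)⁻¹ * ∑ i, ‖v i k‖ ^ 2) / ‖w k‖ ^ 2) • w k)
    (hinfinite : ∀ k, ∃ i, 0 < f i (x k)) :
    limsup (fun k =>
      Metric.infDist (x k) {z : EuclideanSpace ℝ (Fin n) | ∀ i, f i z ≤ 0} ^ (1 / (k : ℝ)))
      atTop < 1 := by
  haveI hmne : Nonempty (Fin m) := ⟨⟨0, hm⟩⟩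
  have hmR : (0:ℝ) < m := by exact_mod_cast hm
  -- continuity of the f i
  have contf : ∀ i, Continuous (f i) := fun i =>
    continuousOn_univ.mp ((hconv i).continuousOn isOpen_univ)
  -- Slater margin δ
  set δ : ℝ := Finset.univ.inf' Finset.univ_nonempty (fun i => -(f i xhat)) with hδdef
  have hδpos : 0 < δ := by
    rw [hδdef, Finset.lt_inf'_iff]
    exact fun i _ => by linarith [hslater i]
  have hδle : ∀ i, f i xhat ≤ -δ := by
    intro i
    have := Finset.inf'_le (fun i => -(f i xhat)) (Finset.mem_univ i)
    linarith
  -- step sizes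
  set S : ℕ → ℝ := fun k => (m : ℝ)⁻¹ * ∑ i, ‖v i k‖ ^ 2 with hSdef
  have hSnonneg : ∀ k, 0 ≤ S k := by
    intro k
    apply mul_nonneg (by positivity)
    exact Finset.sum_nonneg fun i _ => by positivity
  -- per-coordinate inner product bound
  have hvy : ∀ k z, (∀ i, f i z ≤ -ε k) → ∀ i, ‖v i k‖ ^ 2 ≤ ⟪v i k, x k - z⟫ := by
    intro k z hz i
    rcases le_or_gt (f i (x k) + ε k) 0 with hle | hlt
    · have : v i k = 0 := by rw [hv i k, max_eq_left hle]; simp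
      simp [this]
    · have hu := hune i k hlt
      have hu2 : (0:ℝ) < ‖u i k‖ ^ 2 := pow_pos (norm_pos_iff.mpr hu) 2
      have hmax : max 0 (f i (x k) + ε k) = f i (x k) + ε k := max_eq_right hlt.le
      have hinner : f i (x k) + ε k ≤ ⟪u i k, x k - z⟫ := by
        have h1 := hsub i k z
        have h2 : ⟪u i k, z - x k⟫ = -⟪u i k, x k - z⟫ := by
          rw [← inner_neg_right]; congr 1; abel
        have := hz i
        rw [h2] at h1
        linarith
      rw [hv i k, hmax]
      rw [real_inner_smul_left, norm_smul]
      have hlam : (0:ℝ) < (f i (x k) + ε k) / ‖u i k‖ ^ 2 := div_pos hlt hu2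
      rw [Real.norm_eq_abs, abs_of_pos hlam, mul_pow]
      calc ((f i (x k) + ε k) / ‖u i k‖ ^ 2) ^ 2 * ‖u i k‖ ^ 2
          = ((f i (x k) + ε k) / ‖u i k‖ ^ 2) * (f i (x k) + ε k) := by
            field_simp
        _ ≤ ((f i (x k) + ε k) / ‖u i k‖ ^ 2) * ⟪u i k, x k - z⟫ := by
            exact mul_le_mul_of_nonneg_left hinner hlam.le
  -- key inner product bound
  have hwy : ∀ k z, (∀ i, f i z ≤ -ε k) → S k ≤ ⟪w k, x k - z⟫ := by
    intro k z hz
    rw [hw k, real_inner_smul_left, sum_inner]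
    rw [hSdef]
    apply mul_le_mul_of_nonneg_left _ (by positivity)
    exact Finset.sum_le_sum fun i _ => hvy k z hz i
  -- positivity of S k
  have hSpos : ∀ k, 0 < S k := by
    intro k
    obtain ⟨i, hi⟩ := hinfinite k
    have hlt : 0 < f i (x k) + ε k := by linarith [hεpos k]
    have hu := hune i k hlt
    have hvne : v i k ≠ 0 := by
      rw [hv i k]
      intro h
      rcases smul_eq_zero.mp h with h | h
      · have : max 0 (f i (x k) + ε k) = f i (x k) + ε k := max_eq_right hlt.le
        rw [this] at h
        have hu2 : (0:ℝ) < ‖u i k‖ ^ 2 := pow_pos (norm_pos_iff.mpr hu) 2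
        have := div_eq_zero_iff.mp h
        rcases this with h | h
        · linarith
        · exact hu2.ne' h
      · exact hu h
    apply mul_pos (inv_pos.mpr hmR)
    have : (0:ℝ) < ‖v i k‖ ^ 2 := pow_pos (norm_pos_iff.mpr hvne) 2
    refine lt_of_lt_of_le this ?_
    exact Finset.single_le_sum (f := fun j => ‖v j k‖ ^ 2) (fun j _ => by positivity) (Finset.mem_univ i)
  -- norm of w bounded by S
  have hwS : ∀ k, ‖w k‖ ^ 2 ≤ S k := by
    intro k
    have h1 : ‖w k‖ ≤ (m:ℝ)⁻¹ * ∑ i, ‖v i k‖ := by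
      rw [hw k, norm_smul, Real.norm_eq_abs, abs_of_pos (inv_pos.mpr hmR)]
      exact mul_le_mul_of_nonneg_left (norm_sum_le _ _) (by positivity)
    have h2 : (∑ i, ‖v i k‖) ^ 2 ≤ (m:ℝ) * ∑ i, ‖v i k‖ ^ 2 := by
      have := sq_sum_le_card_mul_sum_sq
        (s := (Finset.univ : Finset (Fin m))) (f := fun i => ‖v i k‖)
      simpa using this
    have hm0 : (m:ℝ) ≠ 0 := hmR.ne'
    calc ‖w k‖ ^ 2 ≤ ((m:ℝ)⁻¹ * ∑ i, ‖v i k‖) ^ 2 :=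
          pow_le_pow_left₀ (norm_nonneg _) h1 2
      _ = (m:ℝ)⁻¹ ^ 2 * (∑ i, ‖v i k‖) ^ 2 := by ring
      _ ≤ (m:ℝ)⁻¹ ^ 2 * ((m:ℝ) * ∑ i, ‖v i k‖ ^ 2) :=
          mul_le_mul_of_nonneg_left h2 (by positivity)
      _ = S k := by rw [hSdef]; field_simp
  -- the key Fejér inequality
  have key : ∀ k z, (∀ i, f i z ≤ -ε k) → ‖x (k+1) - z‖ ^ 2 ≤ ‖x k - z‖ ^ 2 - S k := by
    intro k z hz
    have hwge := hwy k z hz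
    have hSp := hSpos k
    have hwne : w k ≠ 0 := by
      intro h0
      rw [h0] at hwge
      simp only [inner_zero_left] at hwge
      linarith
    have hwpos : (0:ℝ) < ‖w k‖ ^ 2 := pow_pos (norm_pos_iff.mpr hwne) 2
    set al : ℝ := S k / ‖w k‖ ^ 2 with hal
    have halpos : 0 < al := div_pos hSp hwpos
    have hx1 : x (k+1) = x k - al • w k := hstep k hwne
    have hal1 : 1 ≤ al := by
      rw [hal, le_div_iff₀ hwpos, one_mul]
      exact hwS k
    have expand : ‖x (k+1) - z‖ ^ 2
        = ‖x k - z‖ ^ 2 - 2 * (al * ⟪w k, x k - z⟫) + al ^ 2 * ‖w k‖ ^ 2 := by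
      rw [hx1]
      have h3 : x k - al • w k - z = (x k - z) - al • w k := by abel
      rw [h3, norm_sub_sq_real, real_inner_smul_right, norm_smul, Real.norm_eq_abs,
        abs_of_pos halpos, mul_pow, real_inner_comm (x k - z) (w k)]
    have hαw : al ^ 2 * ‖w k‖ ^ 2 = al * S k := by
      rw [hal]; field_simp
    rw [expand, hαw]
    have h4 : 2 * (al * S k) ≤ 2 * (al * ⟪w k, x k - z⟫) := by
      have := mul_le_mul_of_nonneg_left hwge halpos.le
      linarith
    have h5 : S k ≤ al * S k := le_mul_of_one_le_left hSp.le hal1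
    linarith
  -- choose K₀ with ε k < δ/2 beyond K₀
  obtain ⟨K₀, hK₀⟩ := eventually_atTop.mp (hεlim.eventually_lt_const (by positivity : (0:ℝ) < δ/2))
  have hεδ : ∀ k, K₀ ≤ k → ε k < δ/2 := hK₀
  -- xhat is deep in all the level sets beyond K₀
  have hxhatC : ∀ k, K₀ ≤ k → ∀ i, f i xhat ≤ -ε k := by
    intro k hk i
    have := hεδ k hk
    have := hδle i
    linarith
  have sqle : ∀ a b : ℝ, 0 ≤ a → 0 ≤ b → a ^ 2 ≤ b ^ 2 → a ≤ b := by
    intro a b ha hb h; nlinarith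
  -- boundedness of the iterates
  set R' : ℝ := ‖x K₀ - xhat‖ + 1 with hR'def
  have hR'pos : 0 < R' := by positivity
  have hbound : ∀ k, K₀ ≤ k → ‖x k - xhat‖ ≤ R' := by
    intro k hk
    induction k, hk using Nat.le_induction with
    | base => rw [hR'def]; linarith
    | succ k hk ih =>
      have h1 := key k xhat (hxhatC k hk)
      have h2 : ‖x (k+1) - xhat‖ ^ 2 ≤ ‖x k - xhat‖ ^ 2 := by
        have := hSnonneg k; linarith
      exact le_trans (sqle _ _ (norm_nonneg _) (norm_nonneg _) h2) ih
  -- uniform bound on the relevant subgradients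
  have hLex : ∀ i : Fin m, ∃ Mi : ℝ, ∀ y ∈ Metric.closedBall xhat (R' + 1), f i y ≤ Mi := by
    intro i
    obtain ⟨y0, -, hy0⟩ := (isCompact_closedBall xhat (R' + 1)).exists_isMaxOn
      (Metric.nonempty_closedBall.mpr (by positivity)) ((contf i).continuousOn)
    exact ⟨f i y0, fun y hy => hy0 hy⟩
  choose M hM using hLex
  set L : ℝ := max 1 (Finset.univ.sup' Finset.univ_nonempty (fun i => M i + ε 0)) with hLdef
  have hL1 : (1:ℝ) ≤ L := le_max_left _ _
  have hLpos : (0:ℝ) < L := lt_of_lt_of_le one_pos hL1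
  have hLM : ∀ i, M i + ε 0 ≤ L := fun i =>
    le_trans (Finset.le_sup' (fun i => M i + ε 0) (Finset.mem_univ i)) (le_max_right _ _)
  have hub : ∀ k, K₀ ≤ k → ∀ i, 0 < f i (x k) + ε k → ‖u i k‖ ≤ L := by
    intro k hk i hlt
    have hu := hune i k hlt
    have hupos : 0 < ‖u i k‖ := norm_pos_iff.mpr hu
    set zz : EuclideanSpace ℝ (Fin n) := x k + ‖u i k‖⁻¹ • u i k with hzzdef
    have hzz : zz ∈ Metric.closedBall xhat (R' + 1) := by
      rw [Metric.mem_closedBall, dist_eq_norm]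
      have h3 : zz - xhat = (x k - xhat) + ‖u i k‖⁻¹ • u i k := by
        rw [hzzdef]; abel
      calc ‖zz - xhat‖ ≤ ‖x k - xhat‖ + ‖‖u i k‖⁻¹ • u i k‖ := by
            rw [h3]; exact norm_add_le _ _
        _ ≤ R' + 1 := by
            rw [norm_smul, Real.norm_eq_abs, abs_of_pos (inv_pos.mpr hupos),
              inv_mul_cancel₀ hupos.ne']
            exact add_le_add_left (hbound k hk) 1
    have h1 := hsub i k zz
    have h2 : ⟪u i k, zz - x k⟫ = ‖u i k‖ := by
      have h4 : zz - x k = ‖u i k‖⁻¹ • u i k := by rw [hzzdef]; abel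
      rw [h4, real_inner_smul_right, real_inner_self_eq_norm_sq]
      field_simp
    have h3 : f i zz ≤ M i := hM i zz hzz
    have h5 : ε k ≤ ε 0 := hεanti.antitone (Nat.zero_le k)
    rw [h2] at h1
    have := hLM i
    linarith
  -- the residual
  set p : ℕ → ℝ := fun k =>
    Finset.univ.sup' Finset.univ_nonempty (fun i => f i (x k) + ε k) with hpdef
  have hp_ge : ∀ k i, f i (x k) + ε k ≤ p k := by
    intro k i
    exact Finset.le_sup' (fun i => f i (x k) + ε k) (Finset.mem_univ i)
  have hp_pos : ∀ k, ε k < p k := by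
    intro k
    obtain ⟨i, hi⟩ := hinfinite k
    have := hp_ge k i
    linarith
  -- the error bound construction
  have herr : ∀ k, K₀ ≤ k → ∃ zz : EuclideanSpace ℝ (Fin n),
      (∀ i, f i zz ≤ -ε k) ∧ ‖x k - zz‖ ≤ 2 * R' / δ * p k := by
    intro k hk
    have hεk := hεδ k hk
    have hεkpos := hεpos k
    have hppos : 0 < p k := lt_trans hεkpos (hp_pos k)
    have hden : 0 < p k + (δ - ε k) := by linarith
    set t : ℝ := p k / (p k + (δ - ε k)) with htdef
    have ht0 : 0 < t := div_pos hppos hden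
    have ht1 : t ≤ 1 := by
      rw [htdef, div_le_one hden]; linarith
    refine ⟨x k + t • (xhat - x k), ?_, ?_⟩
    · intro i
      have hcomb : x k + t • (xhat - x k) = (1 - t) • (x k) + t • xhat := by
        rw [sub_smul, smul_sub, one_smul]; abel
      have hcv := (hconv i).2 (Set.mem_univ (x k)) (Set.mem_univ xhat)
        (by linarith : (0:ℝ) ≤ 1 - t) ht0.le (by ring)
      rw [← hcomb] at hcv
      have hfa : f i (x k) ≤ p k - ε k := by have := hp_ge k i; linarith
      have hb1 : (1 - t) * f i (x k) ≤ (1 - t) * (p k - ε k) :=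
        mul_le_mul_of_nonneg_left hfa (by linarith)
      have hb2 : t * f i xhat ≤ t * (-δ) := mul_le_mul_of_nonneg_left (hδle i) ht0.le
      have heq : (1 - t) * (p k - ε k) + t * (-δ) = -ε k := by
        rw [htdef]; field_simp; ring
      calc f i (x k + t • (xhat - x k)) ≤ (1 - t) * f i (x k) + t * f i xhat := hcv
        _ ≤ (1 - t) * (p k - ε k) + t * (-δ) := by linarith
        _ = -ε k := heq
    · have h6 : x k - (x k + t • (xhat - x k)) = (-t) • (xhat - x k) := by
        rw [neg_smul]; abel
      rw [h6, norm_smul, Real.norm_eq_abs, abs_neg, abs_of_pos ht0]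
      have h7 : ‖xhat - x k‖ ≤ R' := by
        rw [norm_sub_rev]; exact hbound k hk
      have ht2 : t ≤ 2 * p k / δ := by
        rw [htdef, div_le_div_iff₀ hden (by linarith : (0:ℝ) < δ)]
        nlinarith
      calc t * ‖xhat - x k‖ ≤ (2 * p k / δ) * R' := by
            apply mul_le_mul ht2 h7 (norm_nonneg _)
            positivity
        _ = 2 * R' / δ * p k := by ring
  -- lower bound on S k
  have hSlow : ∀ k, K₀ ≤ k → p k ^ 2 / ((m:ℝ) * L ^ 2) ≤ S k := by
    intro k hk
    obtain ⟨i, -, hieq⟩ := Finset.exists_mem_eq_sup' Finset.univ_nonempty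
      (fun i => f i (x k) + ε k)
    have hieq' : p k = f i (x k) + ε k := hieq
    have hppos : 0 < p k := lt_trans (hεpos k) (hp_pos k)
    have hlt : 0 < f i (x k) + ε k := by rw [← hieq']; exact hppos
    have hu := hune i k hlt
    have hupos : 0 < ‖u i k‖ := norm_pos_iff.mpr hu
    have huL : ‖u i k‖ ≤ L := hub k hk i hlt
    have hvnorm : ‖v i k‖ ^ 2 = p k ^ 2 / ‖u i k‖ ^ 2 := by
      rw [hv i k, max_eq_right hlt.le, ← hieq', norm_smul, Real.norm_eq_abs,
        abs_of_pos (div_pos hppos (by positivity)), mul_pow]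
      field_simp
    have h8 : p k ^ 2 / L ^ 2 ≤ ‖v i k‖ ^ 2 := by
      rw [hvnorm]
      exact div_le_div_of_nonneg_left (by positivity) (pow_pos hupos 2)
        (pow_le_pow_left₀ hupos.le huL 2)
    have h9 : ‖v i k‖ ^ 2 ≤ ∑ j, ‖v j k‖ ^ 2 :=
      Finset.single_le_sum (f := fun j => ‖v j k‖ ^ 2) (fun j _ => by positivity)
        (Finset.mem_univ i)
    rw [hSdef]
    have h10 : p k ^ 2 / ((m:ℝ) * L ^ 2) = (m:ℝ)⁻¹ * (p k ^ 2 / L ^ 2) := by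
      field_simp
    rw [h10]
    exact mul_le_mul_of_nonneg_left (le_trans h8 h9) (by positivity)
  -- the shrinking level sets
  set Cs : ℕ → Set (EuclideanSpace ℝ (Fin n)) := fun k => {z | ∀ i, f i z ≤ -ε k} with hCsdef
  have hCclosed : ∀ k, IsClosed (Cs k) := by
    intro k
    have : Cs k = ⋂ i, {z | f i z ≤ -ε k} := by
      ext z; simp [hCsdef, Set.mem_iInter]
    rw [this]
    exact isClosed_iInter fun i => isClosed_le (contf i) continuous_const
  have hCne : ∀ k, K₀ ≤ k → (Cs k).Nonempty := fun k hk => ⟨xhat, hxhatC k hk⟩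
  have hCsub : ∀ k, Cs k ⊆ Cs (k + 1) := by
    intro k z hz i
    have h1 := hz i
    have h2 : ε (k + 1) < ε k := hεanti (Nat.lt_succ_self k)
    linarith
  have hCsub0 : ∀ k, Cs k ⊆ {z : EuclideanSpace ℝ (Fin n) | ∀ i, f i z ≤ 0} := by
    intro k z hz i
    have := hz i
    have := hεpos k
    linarith
  set D : ℕ → ℝ := fun k => Metric.infDist (x k) (Cs k) with hDdef
  have hDnonneg : ∀ k, 0 ≤ D k := fun k => Metric.infDist_nonneg
  -- upper bound on D from the error bound
  have hDp : ∀ k, K₀ ≤ k → D k ≤ 2 * R' / δ * p k := by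
    intro k hk
    obtain ⟨zz, hzz1, hzz2⟩ := herr k hk
    refine le_trans (Metric.infDist_le_dist_of_mem (hzz1 : zz ∈ Cs k)) ?_
    rw [dist_eq_norm]; exact hzz2
  -- the contraction constant
  set β : ℝ := δ ^ 2 / (4 * R' ^ 2 * (m:ℝ) * L ^ 2) with hβdef
  have hβpos : 0 < β := by positivity
  have hSD : ∀ k, K₀ ≤ k → β * D k ^ 2 ≤ S k := by
    intro k hk
    have hppos : 0 < p k := lt_trans (hεpos k) (hp_pos k)
    have h1 : D k ^ 2 ≤ (2 * R' / δ * p k) ^ 2 :=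
      pow_le_pow_left₀ (hDnonneg k) (hDp k hk) 2
    have h2 : β * (2 * R' / δ * p k) ^ 2 = p k ^ 2 / ((m:ℝ) * L ^ 2) := by
      rw [hβdef]; field_simp; ring
    calc β * D k ^ 2 ≤ β * (2 * R' / δ * p k) ^ 2 :=
          mul_le_mul_of_nonneg_left h1 hβpos.le
      _ = p k ^ 2 / ((m:ℝ) * L ^ 2) := h2
      _ ≤ S k := hSlow k hk
  set bq : ℝ := min β (1 / 2) with hbqdef
  have hbqpos : 0 < bq := lt_min hβpos (by norm_num)
  have hbqle : bq ≤ 1 / 2 := min_le_right _ _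
  set q2 : ℝ := 1 - bq with hq2def
  have hq2pos : 0 < q2 := by rw [hq2def]; linarith
  have hq2lt : q2 < 1 := by rw [hq2def]; linarith
  -- one-step contraction of D
  have hrec : ∀ k, K₀ ≤ k → D (k + 1) ^ 2 ≤ q2 * D k ^ 2 := by
    intro k hk
    obtain ⟨zs, hzsmem, hzsdist⟩ := (hCclosed k).exists_infDist_eq_dist (hCne k hk) (x k)
    have hkey := key k zs hzsmem
    have hD1 : D (k + 1) ≤ ‖x (k + 1) - zs‖ := by
      calc D (k + 1) ≤ Metric.infDist (x (k + 1)) (Cs k) :=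
            Metric.infDist_le_infDist_of_subset (hCsub k) (hCne k hk)
        _ ≤ dist (x (k + 1)) zs := Metric.infDist_le_dist_of_mem hzsmem
        _ = ‖x (k + 1) - zs‖ := dist_eq_norm _ _
    have hD2 : ‖x k - zs‖ = D k := by
      rw [← dist_eq_norm]; exact hzsdist.symm
    have h3 : D (k + 1) ^ 2 ≤ ‖x (k + 1) - zs‖ ^ 2 :=
      pow_le_pow_left₀ (hDnonneg (k + 1)) hD1 2
    have h4 : S k ≥ bq * D k ^ 2 := by
      have := hSD k hk
      have hb : bq * D k ^ 2 ≤ β * D k ^ 2 :=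
        mul_le_mul_of_nonneg_right (min_le_left _ _) (by positivity)
      linarith
    rw [hD2] at hkey
    rw [hq2def]
    nlinarith
  -- geometric decay
  have hgeo : ∀ j : ℕ, D (K₀ + j) ^ 2 ≤ q2 ^ j * D K₀ ^ 2 := by
    intro j
    induction j with
    | zero => simp
    | succ j ih =>
      have h1 := hrec (K₀ + j) (Nat.le_add_right _ _)
      calc D (K₀ + (j + 1)) ^ 2 = D ((K₀ + j) + 1) ^ 2 := by ring_nf
        _ ≤ q2 * D (K₀ + j) ^ 2 := h1
        _ ≤ q2 * (q2 ^ j * D K₀ ^ 2) := mul_le_mul_of_nonneg_left ih hq2pos.le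
        _ = q2 ^ (j + 1) * D K₀ ^ 2 := by ring
  set r : ℝ := Real.sqrt q2 with hrdef
  have hrpos : 0 < r := Real.sqrt_pos.mpr hq2pos
  have hr2 : r ^ 2 = q2 := Real.sq_sqrt hq2pos.le
  have hrlt : r < 1 := by nlinarith [hr2, hq2lt, hrpos.le]
  have hgeo' : ∀ j : ℕ, D (K₀ + j) ≤ r ^ j * D K₀ := by
    intro j
    apply sqle _ _ (hDnonneg _) (mul_nonneg (pow_nonneg hrpos.le j) (hDnonneg K₀))
    calc D (K₀ + j) ^ 2 ≤ q2 ^ j * D K₀ ^ 2 := hgeo j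
      _ = (r ^ j * D K₀) ^ 2 := by rw [mul_pow, ← pow_mul, mul_comm j 2, pow_mul, hr2]
  -- distance to the true feasible set
  have hd : ∀ j : ℕ, Metric.infDist (x (K₀ + j))
      {z : EuclideanSpace ℝ (Fin n) | ∀ i, f i z ≤ 0} ≤ r ^ j * D K₀ := by
    intro j
    refine le_trans ?_ (hgeo' j)
    exact Metric.infDist_le_infDist_of_subset (hCsub0 (K₀ + j)) (hCne _ (Nat.le_add_right _ _))
  -- uniform geometric bound
  set A : ℝ := max 1 (D K₀ / r ^ K₀) with hAdef
  have hA1 : (1:ℝ) ≤ A := le_max_left _ _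
  have hApos : (0:ℝ) < A := lt_of_lt_of_le one_pos hA1
  have hAr : ∀ k, K₀ ≤ k → Metric.infDist (x k)
      {z : EuclideanSpace ℝ (Fin n) | ∀ i, f i z ≤ 0} ≤ A * r ^ k := by
    intro k hk
    obtain ⟨j, rfl⟩ := Nat.exists_eq_add_of_le hk
    refine le_trans (hd j) ?_
    have h1 : r ^ j * D K₀ = D K₀ / r ^ K₀ * r ^ (K₀ + j) := by
      rw [pow_add]; field_simp
    rw [h1]
    exact mul_le_mul_of_nonneg_right (le_max_right _ _) (by positivity)
  set c : ℝ := (1 + r) / 2 with hcdef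
  have hc1 : c < 1 := by rw [hcdef]; linarith
  have hrc : r < c := by rw [hcdef]; linarith
  have htend : Tendsto (fun k : ℕ => A ^ (1 / (k:ℝ))) atTop (nhds 1) := by
    have h0 : Tendsto (fun k : ℕ => 1 / (k:ℝ)) atTop (nhds 0) :=
      tendsto_one_div_atTop_nhds_zero_nat
    have hca : ContinuousAt (fun y : ℝ => A ^ y) 0 := Real.continuousAt_const_rpow hApos.ne'
    have := hca.tendsto.comp h0
    simpa [Real.rpow_zero, Function.comp_def] using this
  have hcr1 : 1 < c / r := (one_lt_div hrpos).mpr hrc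
  have hev2 : ∀ᶠ k : ℕ in atTop, A ^ (1 / (k:ℝ)) < c / r := htend.eventually_lt_const hcr1
  have hev3 : ∀ᶠ k : ℕ in atTop, Metric.infDist (x k)
      {z : EuclideanSpace ℝ (Fin n) | ∀ i, f i z ≤ 0} ^ (1 / (k:ℝ)) ≤ c := by
    filter_upwards [hev2, eventually_ge_atTop K₀, eventually_ge_atTop 1] with k h2 hk hk1
    have hk0 : (k:ℝ) ≠ 0 := Nat.cast_ne_zero.mpr (by omega)
    have hinv : 0 ≤ 1 / (k:ℝ) := by positivity
    have h3 : Metric.infDist (x k) {z : EuclideanSpace ℝ (Fin n) | ∀ i, f i z ≤ 0}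
        ^ (1 / (k:ℝ)) ≤ (A * r ^ k) ^ (1 / (k:ℝ)) :=
      Real.rpow_le_rpow Metric.infDist_nonneg (hAr k hk) hinv
    have h4 : (A * r ^ k) ^ (1 / (k:ℝ)) = A ^ (1 / (k:ℝ)) * r := by
      rw [Real.mul_rpow hApos.le (by positivity), ← Real.rpow_natCast r k,
        ← Real.rpow_mul hrpos.le, mul_one_div_cancel hk0, Real.rpow_one]
    have h5 : A ^ (1 / (k:ℝ)) * r ≤ c / r * r :=
      mul_le_mul_of_nonneg_right h2.le hrpos.le
    have h6 : c / r * r = c := div_mul_cancel₀ c hrpos.ne'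
    rw [h4] at h3
    linarith
  have hcb : IsCoboundedUnder (· ≤ ·) atTop (fun k : ℕ => Metric.infDist (x k)
      {z : EuclideanSpace ℝ (Fin n) | ∀ i, f i z ≤ 0} ^ (1 / (k:ℝ))) :=
    isCoboundedUnder_le_of_eventually_le atTop
      (Eventually.of_forall fun k => Real.rpow_nonneg Metric.infDist_nonneg _)
  exact lt_of_le_of_lt (limsup_le_of_le hcb hev3) hc1
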